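/- Let φ be an E3-CNF formula with m clauses C_1, …, C_m over variables x_1, …, x_n, let y, z_1, z_2, z_3 be fresh variables, and let m_1, m_2, m_3 ≥ 1 be integers. Let ψ be the E4-CNF formula consisting of the clauses C_j ∨ y for every j ∈ [m], together with m_1 copies of ¬y ∨ z_1 ∨ ¬z_2 ∨ ¬z_3, m_2 copies of ¬y ∨ ¬z_1 ∨ z_2 ∨ ¬z_3, and m_3 copies of ¬y ∨ ¬z_1 ∨ ¬z_2 ∨ z_3. Let α_start assign 1 to all of x_1,…,x_n and (y,z_1,z_2,z_3) = (1,1,1,1), and let α_end assign 0 to all of x_1,…,x_n and (y,z_1,z_2,z_3) = (1,0,0,0). Then α_start and α_end satisfy ψ, and if φ is satisfiable then opt_ψ(α_start ↔ α_end) = 1. -/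

import Mathlib

/-- An assignment maps each Boolean variable to a truth value. -/
abbrev Assignment (V : Type) := V → Bool

/-- A literal is a variable together with a polarity (`true` = positive);
a clause is a disjunction of literals, represented as the list of its literals
(its width is the length of this list). -/
abbrev Clause (V : Type) := List (V × Bool)

/-- A CNF formula is a conjunction of clauses, represented as a list
(clauses are counted with multiplicity). -/
abbrev CNF (V : Type) := List (Clause V)

/-- An assignment satisfies a clause if it makes at least one literal true. -/
def satClause {V : Type} (α : Assignment V) (C : Clause V) : Bool :=
  C.any fun l => α l.1 == l.2

/-- An assignment satisfies a CNF formula if it satisfies every clause. -/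
def satCNF {V : Type} (α : Assignment V) (φ : CNF V) : Bool :=
  φ.all fun C => satClause α C

/-- The fraction of clauses of `φ` satisfied by `α`. -/
noncomputable def val {V : Type} (φ : CNF V) (α : Assignment V) : ℝ :=
  ((φ.filter fun C => satClause α C).length : ℝ) / (φ.length : ℝ)

/-- The number of clauses of `φ` violated by `α`. -/
def numViol {V : Type} (φ : CNF V) (α : Assignment V) : ℕ :=
  (φ.filter fun C => !satClause α C).length

/-- Two assignments differ on at most one variable. -/
def Adjacent {V : Type} (α β : Assignment V) : Prop :=
  ∀ v w, α v ≠ β v → α w ≠ β w → v = w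

/-- `seq` is a reconfiguration sequence from `s` to `e`: a nonempty finite sequence of
assignments starting at `s`, ending at `e`, in which consecutive assignments differ
on at most one variable. -/
def IsReconfSeq {V : Type} (s e : Assignment V) (seq : List (Assignment V)) : Prop :=
  seq ≠ [] ∧ seq.head? = some s ∧ seq.getLast? = some e ∧ seq.Chain' Adjacent

/-- The value of a reconfiguration sequence: the minimum of `val φ` over its members. -/
noncomputable def seqVal {V : Type} (φ : CNF V) (seq : List (Assignment V)) : ℝ :=
  sInf (val φ '' {α | α ∈ seq})

/-- `opt_φ(s ↔ e)`: the optimal (maximum) value over all reconfiguration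
sequences from `s` to `e`. -/
noncomputable def optVal {V : Type} (φ : CNF V) (s e : Assignment V) : ℝ :=
  sSup (seqVal φ '' {seq | IsReconfSeq s e seq})

section Aux

variable {V : Type}

lemma adjacent_self (f : Assignment V) : Adjacent f f := by
  intro v w hv _
  exact absurd rfl hv

lemma adjacent_update [DecidableEq V] (f : Assignment V) (v : V) (b : Bool) :
    Adjacent f (Function.update f v b) := by
  intro u w hu hw
  have h1 : u = v := by
    by_contra h
    exact hu (Function.update_of_ne h b f).symm
  have h2 : w = v := by
    by_contra h
    exact hw (Function.update_of_ne h b f).symm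
  rw [h1, h2]

lemma reconf_append {s t e : Assignment V} {u₁ u₂ : List (Assignment V)}
    (h₁ : IsReconfSeq s t u₁) (h₂ : IsReconfSeq t e u₂) :
    IsReconfSeq s e (u₁ ++ u₂) := by
  obtain ⟨n1, hd1, l1, c1⟩ := h₁
  obtain ⟨n2, hd2, l2, c2⟩ := h₂
  refine ⟨by simp [n1], ?_, ?_, ?_⟩
  · rw [List.head?_append_of_ne_nil _ n1]; exact hd1
  · rw [List.getLast?_append_of_ne_nil _ n2]; exact l2
  · show List.IsChain _ _
    rw [List.isChain_append]
    refine ⟨c1, c2, ?_⟩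
    intro x hx y hy
    rw [l1, Option.mem_def, Option.some_inj] at hx
    rw [hd2, Option.mem_def, Option.some_inj] at hy
    subst hx; subst hy
    exact adjacent_self t

lemma exists_stage [DecidableEq V] (l : List V) :
    ∀ f g : Assignment V, (∀ w, w ∉ l → f w = g w) →
    ∃ seq : List (Assignment V), IsReconfSeq f g seq ∧
      ∀ β ∈ seq, ∀ w, β w = f w ∨ β w = g w := by
  induction l with
  | nil =>
    intro f g h
    have hfg : f = g := funext fun w => h w List.not_mem_nil
    subst hfg
    refine ⟨[f], ⟨by simp, rfl, rfl, List.isChain_singleton f⟩, ?_⟩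
    intro β hβ w
    simp only [List.mem_singleton] at hβ
    subst hβ; exact Or.inl rfl
  | cons v l ih =>
    intro f g h
    obtain ⟨seq, ⟨hne, hhd, hlast, hch⟩, hmem⟩ :=
      ih (Function.update f v (g v)) g (by
        intro w hw
        rcases eq_or_ne w v with rfl | hwv
        · simp
        · rw [Function.update_of_ne hwv]
          exact h w (by simp [hwv, hw]))
    refine ⟨f :: seq, ⟨by simp, rfl, ?_, ?_⟩, ?_⟩
    · rw [show f :: seq = [f] ++ seq from rfl, List.getLast?_append_of_ne_nil _ hne]
      exact hlast
    · show List.IsChain _ _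
      rw [List.isChain_cons]
      refine ⟨?_, hch⟩
      intro y hy
      rw [hhd, Option.mem_def, Option.some_inj] at hy
      subst hy
      exact adjacent_update f v (g v)
    · intro β hβ w
      rcases List.mem_cons.mp hβ with rfl | hβ
      · exact Or.inl rfl
      · rcases hmem β hβ w with hb | hb
        · rcases eq_or_ne w v with rfl | hwv
          · rw [hb]; right; simp
          · rw [hb, Function.update_of_ne hwv]; exact Or.inl rfl
        · exact Or.inr hb

lemma val_nonneg (φ : CNF V) (α : Assignment V) : 0 ≤ val φ α := by
  unfold val
  positivity

lemma val_le_one (φ : CNF V) (α : Assignment V) : val φ α ≤ 1 := by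
  unfold val
  rcases eq_or_ne (φ.length : ℝ) 0 with h | h
  · rw [h, div_zero]; norm_num
  · rw [div_le_one (lt_of_le_of_ne (Nat.cast_nonneg _) (Ne.symm h))]
    exact_mod_cast List.length_filter_le _ _

lemma val_eq_one (φ : CNF V) (α : Assignment V) (h : satCNF α φ = true) (hne : φ ≠ []) :
    val φ α = 1 := by
  unfold val
  rw [satCNF, List.all_eq_true] at h
  rw [List.filter_eq_self.mpr h]
  have hlen : φ.length ≠ 0 := fun h => hne (List.length_eq_zero_iff.mp h)
  exact div_self (by exact_mod_cast hlen)

end Aux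

/-- Completeness of the reduction to E4-SAT Reconfiguration: with fresh
variables `y = inr 0`, `z₁ = inr 1`, `z₂ = inr 2`, `z₃ = inr 3`, the E4-CNF formula `ψ`
consists of the clauses `C_j ∨ y` (for `j ∈ [m]`), `m₁ ≥ 1` copies of `¬y ∨ z₁ ∨ ¬z₂ ∨ ¬z₃`,
`m₂ ≥ 1` copies of `¬y ∨ ¬z₁ ∨ z₂ ∨ ¬z₃`, and `m₃ ≥ 1` copies of `¬y ∨ ¬z₁ ∨ ¬z₂ ∨ z₃`;
`αs` assigns `1` to every variable (so `(y,z₁,z₂,z₃) = (1,1,1,1)`), and `αe` assigns `0` to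
every `xᵢ` and `(y,z₁,z₂,z₃) = (1,0,0,0)`. Then `αs` and `αe` satisfy `ψ`, and if `φ` is
satisfiable then `opt_ψ(αs ↔ αe) = 1`. -/
theorem stmt15 {n : ℕ} (φ : CNF (Fin n)) (h3 : ∀ C ∈ φ, C.length = 3)
    (m₁ m₂ m₃ : ℕ) (hm₁ : 1 ≤ m₁) (hm₂ : 1 ≤ m₂) (hm₃ : 1 ≤ m₃)
    (ψ : CNF (Fin n ⊕ Fin 4))
    (hψ : ψ = (φ.map fun C => C.map (fun l => (Sum.inl l.1, l.2)) ++ [(Sum.inr 0, true)])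
        ++ List.replicate m₁
            [(Sum.inr 0, false), (Sum.inr 1, true), (Sum.inr 2, false), (Sum.inr 3, false)]
        ++ List.replicate m₂
            [(Sum.inr 0, false), (Sum.inr 1, false), (Sum.inr 2, true), (Sum.inr 3, false)]
        ++ List.replicate m₃
            [(Sum.inr 0, false), (Sum.inr 1, false), (Sum.inr 2, false), (Sum.inr 3, true)])
    (αs αe : Assignment (Fin n ⊕ Fin 4))
    (hαs : αs = fun _ => true)
    (hαe : αe = Sum.elim (fun _ => false) fun i => i == 0) :
    satCNF αs ψ ∧ satCNF αe ψ ∧ ((∃ α, satCNF α φ) → optVal ψ αs αe = 1) := by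
  -- ψ is nonempty
  have hne : ψ ≠ [] := by
    rw [hψ]
    intro h
    have := congrArg List.length h
    simp [List.length_append, List.length_replicate] at this
    omega
  -- three sufficient conditions for satisfying ψ
  have satA : ∀ β : Assignment (Fin n ⊕ Fin 4), (∀ j : Fin 4, β (Sum.inr j) = true) →
      satCNF β ψ = true := by
    intro β hβ
    rw [hψ, satCNF, List.all_eq_true]
    intro C hC
    simp only [List.mem_append, List.mem_map, List.mem_replicate] at hC
    rcases hC with ((⟨D, hD, rfl⟩ | ⟨-, rfl⟩) | ⟨-, rfl⟩) | ⟨-, rfl⟩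
    · simp [satClause, List.any_append, hβ 0]
    · simp [satClause, hβ 1]
    · simp [satClause, hβ 2]
    · simp [satClause, hβ 3]
  have satB : ∀ β : Assignment (Fin n ⊕ Fin 4), β (Sum.inr 0) = false →
      satCNF (fun i => β (Sum.inl i)) φ = true → satCNF β ψ = true := by
    intro β h0 hφs
    rw [hψ, satCNF, List.all_eq_true]
    intro C hC
    simp only [List.mem_append, List.mem_map, List.mem_replicate] at hC
    rcases hC with ((⟨D, hD, rfl⟩ | ⟨-, rfl⟩) | ⟨-, rfl⟩) | ⟨-, rfl⟩
    · rw [satCNF, List.all_eq_true] at hφs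
      have hD' := hφs D hD
      rw [satClause, List.any_eq_true] at hD' ⊢
      obtain ⟨l, hl, hsat⟩ := hD'
      refine ⟨(Sum.inl l.1, l.2), ?_, hsat⟩
      rw [List.mem_append]
      exact Or.inl (List.mem_map.mpr ⟨l, hl, rfl⟩)
    · simp [satClause, h0]
    · simp [satClause, h0]
    · simp [satClause, h0]
  have satC : ∀ β : Assignment (Fin n ⊕ Fin 4), β (Sum.inr 0) = true →
      (∀ j : Fin 4, j ≠ 0 → β (Sum.inr j) = false) → satCNF β ψ = true := by
    intro β h0 hz
    rw [hψ, satCNF, List.all_eq_true]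
    intro C hC
    simp only [List.mem_append, List.mem_map, List.mem_replicate] at hC
    rcases hC with ((⟨D, hD, rfl⟩ | ⟨-, rfl⟩) | ⟨-, rfl⟩) | ⟨-, rfl⟩
    · simp [satClause, List.any_append, h0]
    · simp [satClause, hz 2 (by decide)]
    · simp [satClause, hz 1 (by decide)]
    · simp [satClause, hz 1 (by decide)]
  subst hαs hαe
  refine ⟨satA _ (fun _ => rfl), satC _ (by simp) (fun j hj => by simp [hj]), ?_⟩
  rintro ⟨α, hα⟩
  -- intermediate target assignments
  set g1 : Assignment (Fin n ⊕ Fin 4) := Sum.elim α (fun _ => true) with hg1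
  set g2 : Assignment (Fin n ⊕ Fin 4) := Sum.elim α (fun j => !(j == 0)) with hg2
  set g3 : Assignment (Fin n ⊕ Fin 4) := Sum.elim α (fun _ => false) with hg3
  set g4 : Assignment (Fin n ⊕ Fin 4) := Sum.elim α (fun j => (j == 0)) with hg4
  set lX : List (Fin n ⊕ Fin 4) := (List.finRange n).map Sum.inl with hlX
  have hlXmem : ∀ i : Fin n, Sum.inl i ∈ lX :=
    fun i => List.mem_map.mpr ⟨i, List.mem_finRange i, rfl⟩
  -- Stage A : αs → g1
  obtain ⟨sA, hA, hAm⟩ := exists_stage lX (fun _ => true) g1 (by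
    intro w hw
    cases w with
    | inl i => exact absurd (hlXmem i) hw
    | inr j => rfl)
  -- Stage B : g1 → g2
  obtain ⟨sB, hB, hBm⟩ := exists_stage [Sum.inr 0] g1 g2 (by
    intro w hw
    cases w with
    | inl i => rfl
    | inr j =>
      have hj : j ≠ 0 := by
        intro h; exact hw (by simp [h])
      simp [hg1, hg2, hj])
  -- Stage C : g2 → g3
  obtain ⟨sC, hC, hCm⟩ := exists_stage [Sum.inr 1, Sum.inr 2, Sum.inr 3] g2 g3 (by
    intro w hw
    cases w with
    | inl i => rfl
    | inr j =>
      have hj : j = 0 := by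
        have h1 : j ≠ 1 := by intro h; exact hw (by simp [h])
        have h2 : j ≠ 2 := by intro h; exact hw (by simp [h])
        have h3 : j ≠ 3 := by intro h; exact hw (by simp [h])
        clear hw
        revert h1 h2 h3; revert j; decide
      simp [hg2, hg3, hj])
  -- Stage D : g3 → g4
  obtain ⟨sD, hD, hDm⟩ := exists_stage [Sum.inr 0] g3 g4 (by
    intro w hw
    cases w with
    | inl i => rfl
    | inr j =>
      have hj : j ≠ 0 := by
        intro h; exact hw (by simp [h])
      simp [hg3, hg4, hj])
  -- Stage E : g4 → αe
  obtain ⟨sE, hE, hEm⟩ := exists_stage lX g4 (Sum.elim (fun _ => false) fun i => i == 0) (by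
    intro w hw
    cases w with
    | inl i => exact absurd (hlXmem i) hw
    | inr j => rfl)
  set total : List (Assignment (Fin n ⊕ Fin 4)) := sA ++ sB ++ sC ++ sD ++ sE with htotal
  have hseq : IsReconfSeq (fun _ => true) (Sum.elim (fun _ => false) fun i => i == 0) total :=
    reconf_append (reconf_append (reconf_append (reconf_append hA hB) hC) hD) hE
  -- every member of the sequence satisfies ψ
  have hsat : ∀ β ∈ total, satCNF β ψ = true := by
    intro β hβ
    rw [htotal] at hβ
    simp only [List.mem_append] at hβ
    rcases hβ with ((((hβ | hβ) | hβ) | hβ) | hβ)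
    · -- stage A : all extra variables true
      apply satA
      intro j
      rcases hAm β hβ (Sum.inr j) with h | h
      · exact h
      · rw [h]; rfl
    · -- stage B
      have hx : ∀ i, β (Sum.inl i) = α i := by
        intro i
        rcases hBm β hβ (Sum.inl i) with h | h <;> exact h
      cases hb : β (Sum.inr 0) with
      | false =>
        apply satB β hb
        have : (fun i => β (Sum.inl i)) = α := funext hx
        rw [this]; exact hα
      | true =>
        apply satA
        intro j
        rcases eq_or_ne j 0 with rfl | hj
        · exact hb
        · rcases hBm β hβ (Sum.inr j) with h | h
          · exact h
          · rw [h]; simp [hg2, hj]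
    · -- stage C : y is false
      have hx : ∀ i, β (Sum.inl i) = α i := by
        intro i
        rcases hCm β hβ (Sum.inl i) with h | h <;> exact h
      have hb : β (Sum.inr 0) = false := by
        rcases hCm β hβ (Sum.inr 0) with h | h
        · rw [h]; simp [hg2]
        · exact h
      apply satB β hb
      have : (fun i => β (Sum.inl i)) = α := funext hx
      rw [this]; exact hα
    · -- stage D
      have hx : ∀ i, β (Sum.inl i) = α i := by
        intro i
        rcases hDm β hβ (Sum.inl i) with h | h <;> exact h
      cases hb : β (Sum.inr 0) with
      | false =>
        apply satB β hb
        have : (fun i => β (Sum.inl i)) = α := funext hx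
        rw [this]; exact hα
      | true =>
        apply satC β hb
        intro j hj
        rcases hDm β hβ (Sum.inr j) with h | h
        · rw [h]; rfl
        · rw [h]; simp [hg4, hj]
    · -- stage E : (y,z) = (1,0,0,0)
      apply satC β
      · rcases hEm β hβ (Sum.inr 0) with h | h
        · rw [h]; rfl
        · rw [h]; rfl
      · intro j hj
        rcases hEm β hβ (Sum.inr j) with h | h
        · rw [h]; simp [hg4, hj]
        · rw [h]; simp [hj]
  -- values
  have hub : ∀ x ∈ (seqVal ψ '' {u | IsReconfSeq (fun _ => true)
      (Sum.elim (fun _ => false) fun i => i == 0) u}), x ≤ 1 := by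
    rintro x ⟨u, hu, rfl⟩
    obtain ⟨a, t, rfl⟩ := List.exists_cons_of_ne_nil hu.1
    have hmem : val ψ a ∈ val ψ '' {α | α ∈ a :: t} :=
      ⟨a, List.mem_cons_self, rfl⟩
    calc seqVal ψ (a :: t) ≤ val ψ a := by
          apply csInf_le _ hmem
          refine ⟨0, ?_⟩
          rintro y ⟨b, hb, rfl⟩
          exact val_nonneg _ _
      _ ≤ 1 := val_le_one _ _
  have hseqval : seqVal ψ total = 1 := by
    have himg : val ψ '' {α | α ∈ total} = {1} := by
      ext x
      simp only [Set.mem_image, Set.mem_singleton_iff, Set.mem_setOf_eq]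
      constructor
      · rintro ⟨a, ha, rfl⟩
        exact val_eq_one _ _ (hsat a ha) hne
      · rintro rfl
        have hm : (fun _ => true : Assignment (Fin n ⊕ Fin 4)) ∈ total :=
          List.mem_of_mem_head? (by rw [hseq.2.1]; rfl)
        exact ⟨_, hm, val_eq_one _ _ (hsat _ hm) hne⟩
    rw [seqVal, himg, csInf_singleton]
  rw [optVal]
  apply le_antisymm
  · exact Real.sSup_le hub zero_le_one
  · exact le_csSup ⟨1, hub⟩ ⟨total, hseq, hseqval⟩
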